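/- Let ζ ∈ (0,1), let r ∈ ℕ with r ≥ 1, let (a_n)_{n∈ℕ} be a summable sequence of nonnegative real numbers, and let B ⊆ ℂ be an open set with 0 ∉ B. Suppose there exists δ > 0 such that for all z ∈ B and all n ∈ ℕ one has |τ_z^{(n)}(1) − (−1/(ζz))| ≥ δ. Then the series F_r(z) = Σ_{n=0}^∞ a_n · (τ_z^{(n)}(1))^r converges for every z ∈ B and defines an analytic function of z on B. -/

import Mathlib

/-- `h ζ w = ((ζ + w)/(1 + ζ w))^2`. -/
noncomputable def hmap (ζ : ℝ) (w : ℂ) : ℂ := (((ζ : ℂ) + w) / (1 + (ζ : ℂ) * w)) ^ 2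

/-- The `n`-th iterate `τ_z^{(n)}(1)` of `u ↦ h(z·u)` starting from `1`. -/
noncomputable def tauIter (ζ : ℝ) (z : ℂ) : ℕ → ℂ
  | 0 => 1
  | n + 1 => hmap ζ (z * tauIter ζ z n)

lemma denom_lb (ζ δ : ℝ) (hζ0 : 0 < ζ) (z τ : ℂ) (hz : z ≠ 0)
    (hd : δ ≤ ‖τ - (-1 / ((ζ : ℂ) * z))‖) :
    ζ * ‖z‖ * δ ≤ ‖1 + (ζ : ℂ) * z * τ‖ := by
  have hζz : ((ζ : ℂ) * z) ≠ 0 := by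
    apply mul_ne_zero _ hz
    exact_mod_cast (ne_of_gt hζ0)
  have h1 : (1 + (ζ : ℂ) * z * τ) = ((ζ : ℂ) * z) * (τ - (-1 / ((ζ : ℂ) * z))) := by
    rw [mul_sub, mul_div_assoc', mul_neg_one, neg_div, div_self hζz]
    ring
  rw [h1, norm_mul, norm_mul, Complex.norm_real, Real.norm_of_nonneg hζ0.le]
  have hpos : 0 ≤ ζ * ‖z‖ := by positivity
  calc ζ * ‖z‖ * δ ≤ ζ * ‖z‖ * ‖τ - (-1 / ((ζ : ℂ) * z))‖ :=
        mul_le_mul_of_nonneg_left hd hpos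
    _ = _ := by ring

lemma tau_bound (ζ δ c : ℝ) (hζ0 : 0 < ζ) (hζ1 : ζ < 1) (hδ0 : 0 < δ) (hc : 0 < c)
    (z : ℂ) (hz : c ≤ ‖z‖)
    (hd : ∀ n, δ ≤ ‖tauIter ζ z n - (-1 / ((ζ : ℂ) * z))‖) :
    ∀ n, ‖tauIter ζ z n‖ ≤ max 1 ((1/ζ + (1/ζ)/(ζ*c*δ))^2) := by
  intro n
  match n with
  | 0 => simp [tauIter]
  | n + 1 =>
    apply le_max_of_le_right
    have hz0 : z ≠ 0 := by
      intro h; rw [h] at hz; simp at hz; linarith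
    set τ := tauIter ζ z n with hτ
    have hden : ζ * c * δ ≤ ‖1 + (ζ : ℂ) * (z * τ)‖ := by
      have h1 := denom_lb ζ δ hζ0 z τ hz0 (hd n)
      have h2 : ζ * c * δ ≤ ζ * ‖z‖ * δ :=
        mul_le_mul_of_nonneg_right (mul_le_mul_of_nonneg_left hz hζ0.le) hδ0.le
      calc ζ * c * δ ≤ ζ * ‖z‖ * δ := h2
        _ ≤ ‖1 + (ζ : ℂ) * z * τ‖ := h1
        _ = ‖1 + (ζ : ℂ) * (z * τ)‖ := by ring_nf
    have hdenpos : 0 < ζ * c * δ := by positivity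
    have hden0 : (1 + (ζ : ℂ) * (z * τ)) ≠ 0 := by
      intro h; rw [h] at hden; simp at hden; linarith
    have hζne : ((ζ : ℂ)) ≠ 0 := by exact_mod_cast (ne_of_gt hζ0)
    have key : ((ζ : ℂ) + z * τ) / (1 + (ζ : ℂ) * (z * τ))
        = 1/(ζ : ℂ) + ((ζ : ℂ) - 1/(ζ : ℂ)) / (1 + (ζ : ℂ) * (z * τ)) := by
      rw [div_add_div _ _ hζne hden0, div_eq_div_iff hden0 (mul_ne_zero hζne hden0)]
      field_simp
      ring
    have habs1 : ‖(ζ : ℂ) - 1/(ζ : ℂ)‖ ≤ 1/ζ := by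
      have : ((ζ : ℂ) - 1/(ζ : ℂ)) = ((ζ - 1/ζ : ℝ) : ℂ) := by push_cast; ring
      rw [this, Complex.norm_real, Real.norm_eq_abs]
      have h1 : ζ - 1/ζ ≤ 0 := by
        have : ζ ≤ 1/ζ := by
          rw [le_div_iff₀ hζ0]; nlinarith
        linarith
      rw [abs_of_nonpos h1]
      have : 0 < 1/ζ := by positivity
      nlinarith
    have hmob : ‖((ζ : ℂ) + z * τ) / (1 + (ζ : ℂ) * (z * τ))‖
        ≤ 1/ζ + (1/ζ)/(ζ*c*δ) := by
      rw [key]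
      calc ‖1/(ζ : ℂ) + ((ζ : ℂ) - 1/(ζ : ℂ)) / (1 + (ζ : ℂ) * (z * τ))‖
          ≤ ‖1/(ζ : ℂ)‖
            + ‖((ζ : ℂ) - 1/(ζ : ℂ)) / (1 + (ζ : ℂ) * (z * τ))‖ := by
            apply norm_add_le
        _ ≤ 1/ζ + (1/ζ)/(ζ*c*δ) := by
            apply add_le_add
            · rw [norm_div]
              simp [abs_of_pos hζ0]
            · rw [norm_div]
              apply div_le_div₀ (by positivity) habs1 hdenpos hden
    show ‖hmap ζ (z * τ)‖ ≤ _
    rw [hmap, norm_pow]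
    exact pow_le_pow_left₀ (by positivity) hmob 2

lemma tau_diff (ζ δ : ℝ) (hζ0 : 0 < ζ) (hδ0 : 0 < δ) (B : Set ℂ) (hB0 : (0 : ℂ) ∉ B)
    (hd : ∀ z ∈ B, ∀ n : ℕ, δ ≤ ‖tauIter ζ z n - (-1 / ((ζ : ℂ) * z))‖) :
    ∀ n : ℕ, DifferentiableOn ℂ (fun z => tauIter ζ z n) B := by
  intro n
  induction n with
  | zero => simpa [tauIter] using differentiableOn_const (1 : ℂ)
  | succ n ih =>
    have hg : DifferentiableOn ℂ (fun z => z * tauIter ζ z n) B :=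
      differentiableOn_id.mul ih
    have hden : ∀ z ∈ B, (1 + (ζ : ℂ) * (z * tauIter ζ z n)) ≠ 0 := by
      intro z hz
      have hz0 : z ≠ 0 := fun h => hB0 (h ▸ hz)
      have h1 := denom_lb ζ δ hζ0 z (tauIter ζ z n) hz0 (hd z hz n)
      have h2 : 0 < ζ * ‖z‖ * δ := by
        have : 0 < ‖z‖ := norm_pos_iff.mpr hz0
        positivity
      intro h
      rw [show (ζ : ℂ) * z * tauIter ζ z n = (ζ : ℂ) * (z * tauIter ζ z n) by ring, h] at h1
      simp at h1; linarith
    show DifferentiableOn ℂ (fun z => hmap ζ (z * tauIter ζ z n)) B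
    simp only [hmap]
    exact (((differentiableOn_const _).add hg).div
      ((differentiableOn_const _).add ((differentiableOn_const _).mul hg)) hden).pow 2

/-- If the orbit `τ_z^{(n)}(1)` stays uniformly away from the pole `-1/(ζ z)` on an open
set `B` not containing `0`, then `F_r` converges and is analytic on `B`. -/
theorem stmt3 (ζ : ℝ) (hζ0 : 0 < ζ) (hζ1 : ζ < 1) (r : ℕ) (hr : 1 ≤ r)
    (a : ℕ → ℝ) (ha : Summable a) (ha' : ∀ n, 0 ≤ a n)
    (B : Set ℂ) (hB : IsOpen B) (hB0 : (0 : ℂ) ∉ B)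
    (hδ : ∃ δ : ℝ, 0 < δ ∧ ∀ z ∈ B, ∀ n : ℕ,
      δ ≤ ‖tauIter ζ z n - (-1 / ((ζ : ℂ) * z))‖) :
    (∀ z ∈ B, Summable (fun n : ℕ => (a n : ℂ) * (tauIter ζ z n) ^ r)) ∧
    AnalyticOnNhd ℂ (fun z => ∑' n : ℕ, (a n : ℂ) * (tauIter ζ z n) ^ r) B := by
  obtain ⟨δ, hδ0, hd⟩ := hδ
  have hsum : ∀ z ∈ B, Summable (fun n : ℕ => (a n : ℂ) * (tauIter ζ z n) ^ r) := by
    intro z hz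
    have hz0 : z ≠ 0 := fun h => hB0 (h ▸ hz)
    have hc : 0 < ‖z‖ := norm_pos_iff.mpr hz0
    set C := max 1 ((1/ζ + (1/ζ)/(ζ*(‖z‖)*δ))^2) with hC
    have hC1 : (1:ℝ) ≤ C := le_max_left _ _
    have hbd := tau_bound ζ δ (‖z‖) hζ0 hζ1 hδ0 hc z le_rfl (hd z hz)
    apply Summable.of_norm
    refine Summable.of_nonneg_of_le (fun n => norm_nonneg _) ?_ (ha.mul_right (C ^ r))
    intro n
    rw [norm_mul, norm_pow]
    have h1 : ‖(a n : ℂ)‖ = a n := by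
      simp [Complex.norm_real, abs_of_nonneg (ha' n)]
    rw [h1]
    apply mul_le_mul_of_nonneg_left _ (ha' n)
    exact pow_le_pow_left₀ (norm_nonneg _) (hbd n) r
  refine ⟨hsum, ?_⟩
  have hdiff : DifferentiableOn ℂ (fun z => ∑' n : ℕ, (a n : ℂ) * (tauIter ζ z n) ^ r) B := by
    intro z₀ hz₀
    obtain ⟨ε, hε0, hball⟩ := Metric.isOpen_iff.mp hB z₀ hz₀
    have hz00 : z₀ ≠ 0 := fun h => hB0 (h ▸ hz₀)
    have hc0 : 0 < ‖z₀‖ := norm_pos_iff.mpr hz00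
    set c := ‖z₀‖ / 2 with hcdef
    have hcpos : 0 < c := by positivity
    set ε' := min ε c with hε'def
    have hε'0 : 0 < ε' := lt_min hε0 hcpos
    have hball' : Metric.ball z₀ ε' ⊆ B :=
      (Metric.ball_subset_ball (min_le_left _ _)).trans hball
    have hlow : ∀ z ∈ Metric.ball z₀ ε', c ≤ ‖z‖ := by
      intro z hzb
      have hdist : dist z z₀ < ε' := Metric.mem_ball.mp hzb
      have h1 : ε' ≤ c := min_le_right _ _
      have h2 : ‖z - z₀‖ < c := by
        rw [← dist_eq_norm]; linarith
      have h3 : ‖z₀‖ - ‖z‖ ≤ ‖z - z₀‖ := by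
        calc ‖z₀‖ - ‖z‖ ≤ ‖z₀ - z‖ := by
              exact norm_sub_norm_le z₀ z
          _ = ‖z - z₀‖ := norm_sub_rev z₀ z
      have : ‖z₀‖ = 2 * c := by rw [hcdef]; ring
      linarith
    set C := max 1 ((1/ζ + (1/ζ)/(ζ*c*δ))^2) with hC
    have hC1 : (1:ℝ) ≤ C := le_max_left _ _
    have hC0 : (0:ℝ) ≤ C := by linarith
    have hbound : ∀ (n : ℕ) (z : ℂ), z ∈ Metric.ball z₀ ε' →
        ‖(a n : ℂ) * (tauIter ζ z n) ^ r‖ ≤ a n * C ^ r := by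
      intro n z hzb
      have hbd := tau_bound ζ δ c hζ0 hζ1 hδ0 hcpos z (hlow z hzb)
        (hd z (hball' hzb))
      rw [norm_mul, norm_pow]
      have h1 : ‖(a n : ℂ)‖ = a n := by
        simp [Complex.norm_real, abs_of_nonneg (ha' n)]
      rw [h1]
      apply mul_le_mul_of_nonneg_left _ (ha' n)
      exact pow_le_pow_left₀ (norm_nonneg _) (hbd n) r
    have htu : TendstoUniformlyOn
        (fun (t : Finset ℕ) (z : ℂ) => ∑ n ∈ t, (a n : ℂ) * (tauIter ζ z n) ^ r)
        (fun z => ∑' n : ℕ, (a n : ℂ) * (tauIter ζ z n) ^ r)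
        Filter.atTop (Metric.ball z₀ ε') :=
      tendstoUniformlyOn_tsum (ha.mul_right (C ^ r)) hbound
    have hFd : ∀ t : Finset ℕ, DifferentiableOn ℂ
        (fun z => ∑ n ∈ t, (a n : ℂ) * (tauIter ζ z n) ^ r) (Metric.ball z₀ ε') := by
      intro t
      apply DifferentiableOn.fun_sum
      intro n _
      exact (differentiableOn_const _).mul
        (((tau_diff ζ δ hζ0 hδ0 B hB0 hd n).mono hball').pow r)
    have hd' : DifferentiableOn ℂ
        (fun z => ∑' n : ℕ, (a n : ℂ) * (tauIter ζ z n) ^ r) (Metric.ball z₀ ε') :=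
      (htu.tendstoLocallyUniformlyOn).differentiableOn
        (Filter.Eventually.of_forall hFd) Metric.isOpen_ball
    exact ((hd' z₀ (Metric.mem_ball_self hε'0)).differentiableAt
      (Metric.isOpen_ball.mem_nhds (Metric.mem_ball_self hε'0))).differentiableWithinAt
  exact hdiff.analyticOnNhd hB
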